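/- For the q-trapezoidal functional L(f) = ∫_a^b f(x) d_{1/q}x − ((b − aq)/[2]_q) f(a) − ((bq − a)/[2]_q) f(b), one has L(x²) = −(b − a)(bq − a)(b − aq)/[3]_q!. -/

import Mathlib

/-- q-derivative: `D_q f(x) = (f(qx) - f x)/((q-1)x)`. -/
noncomputable def qDeriv (q : ℝ) (f : ℝ → ℝ) (x : ℝ) : ℝ :=
  (f (q * x) - f x) / ((q - 1) * x)

/-- Iterated q-derivative. -/
noncomputable def qIterDeriv (q : ℝ) (n : ℕ) (f : ℝ → ℝ) : ℝ → ℝ :=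
  (qDeriv q)^[n] f

/-- Jackson q-integral on `[0,b]`. -/
noncomputable def qInt0 (q b : ℝ) (f : ℝ → ℝ) : ℝ :=
  (1 - q) * b * ∑' i : ℕ, q ^ i * f (q ^ i * b)

/-- Jackson q-integral on `[a,b]`. -/
noncomputable def qInt (q a b : ℝ) (f : ℝ → ℝ) : ℝ :=
  qInt0 q b f - qInt0 q a f

/-- q-integer `[n]_q = 1 + q + ⋯ + q^(n-1)`. -/
noncomputable def qNat (q : ℝ) (n : ℕ) : ℝ :=
  ∑ k ∈ Finset.range n, q ^ k

/-- q-factorial `[n]_q!`. -/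
noncomputable def qFact (q : ℝ) (n : ℕ) : ℝ :=
  ∏ k ∈ Finset.range n, qNat q (k + 1)

/-- q-power `(x - t)^{n,q} = (x - q^{n-1} t) ⋯ (x - q t)(x - t)`. -/
noncomputable def qPow (q : ℝ) (n : ℕ) (x t : ℝ) : ℝ :=
  ∏ j ∈ Finset.range n, (x - q ^ j * t)

/-- Truncated q-power `(x - t)_+^{n,q} = (x - q^{n-1} t) ⋯ (x - q t)·max (x - t) 0`. -/
noncomputable def qPowPlus (q : ℝ) (n : ℕ) (x t : ℝ) : ℝ :=
  (∏ j ∈ Finset.Ico 1 n, (x - q ^ j * t)) * max (x - t) 0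


lemma qInt0_sq (q c : ℝ) (hq : 1 < q) :
    qInt0 (1/q) c (fun x => x^2) = c^3 * q^2 / (1 + q + q^2) := by
  have hq0 : (0:ℝ) < q := lt_trans one_pos hq
  have hr : |(1/q)^3| < 1 := by
    rw [abs_of_pos (by positivity)]
    have h1 : 1/q < 1 := by rw [div_lt_one hq0]; exact hq
    exact pow_lt_one₀ (by positivity) h1 (by norm_num)
  unfold qInt0
  have heq : (fun i : ℕ => (1/q) ^ i * (fun x => x^2) ((1/q) ^ i * c)) = fun i : ℕ => ((1/q)^3)^i * c^2 := by
    funext i; simp only []; ring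
  rw [heq, tsum_mul_right, tsum_geometric_of_abs_lt_one hr]
  have h4 : -q + q^4 ≠ 0 := by nlinarith [pow_lt_pow_right₀ hq (show 1 < 4 by norm_num)]
  have h3 : (1:ℝ) + q + q^2 ≠ 0 := by positivity
  have hqne : q ≠ 0 := ne_of_gt hq0
  have h5 : (1:ℝ) - (1/q)^3 ≠ 0 := by
    have : (1/q)^3 < 1 := by rw [abs_of_pos (by positivity)] at hr; exact hr
    linarith
  rw [eq_div_iff h3]
  field_simp
  have h6 : (-1 + q^3 : ℝ) ≠ 0 := ne_of_gt (by nlinarith [pow_lt_pow_right₀ hq (show 1 < 3 by norm_num)])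
  linear_combination c^3*(mul_inv_cancel₀ h6)

/-- value of the q-trapezoidal functional at `x²`:
`L(x²) = -(b-a)(bq-a)(b-aq)/[3]_q!`. -/
theorem q_trapezoid_x_sq (q a b : ℝ) (hq : 1 < q) (ha : 0 < a) (hab : a < b) :
    qInt (1/q) a b (fun x => x^2) - (b - a*q)/(1+q) * a^2 - (b*q - a)/(1+q) * b^2
      = -((b - a) * (b*q - a) * (b - a*q)) / ((1 + q) * (1 + q + q^2)) := by
  have hq0 : (0:ℝ) < q := lt_trans one_pos hq
  unfold qInt
  rw [qInt0_sq q b hq, qInt0_sq q a hq]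
  have h2 : (1:ℝ) + q ≠ 0 := by positivity
  have h3 : (1:ℝ) + q + q^2 ≠ 0 := by positivity
  field_simp
  ring
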